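/- Let H be a strongly primary monoid with Λ(H) < ∞. Then ρ_{Λ(H)}(H) = ∞, and hence ρ_k(H) = ∞ for all k ≥ Λ(H). In particular, H is not half-factorial. -/
import Mathlib


open Pointwise

section MonoidDefs

variable {G : Type*} [CommGroup G]

/-- `x` is a unit of the submonoid `H`. -/
def IsHUnit (H : Submonoid G) (x : G) : Prop := x ∈ H ∧ x⁻¹ ∈ H

/-- The set of non-units of `H`. -/
def nonUnits (H : Submonoid G) : Set G := {x | x ∈ H ∧ x⁻¹ ∉ H}

/-- `u` is an atom (irreducible element) of `H`. -/
def IsHAtom (H : Submonoid G) (u : G) : Prop :=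
  u ∈ H ∧ ¬ IsHUnit H u ∧
    ∀ a b : G, a ∈ H → b ∈ H → u = a * b → IsHUnit H a ∨ IsHUnit H b

/-- `G` is the quotient group of `H`. -/
def IsQuotientGroup (H : Submonoid G) : Prop :=
  ∀ g : G, ∃ a ∈ H, ∃ b ∈ H, g = a / b

/-- `H` is a primary monoid. -/
def IsPrimaryMonoid (H : Submonoid G) : Prop :=
  (nonUnits H).Nonempty ∧
    ∀ a ∈ nonUnits H, ∀ b ∈ nonUnits H, ∃ n : ℕ, 0 < n ∧ b ^ n ∈ a • (H : Set G)

/-- `H` is a strongly primary monoid. -/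
def IsStronglyPrimary (H : Submonoid G) : Prop :=
  (nonUnits H).Nonempty ∧
    ∀ a ∈ nonUnits H, ∃ n : ℕ, 0 < n ∧ nonUnits H ^ n ⊆ a • (H : Set G)

/-- `x` and `y` are associated in `H`. -/
def HAssoc (H : Submonoid G) (x y : G) : Prop := IsHUnit H (x / y)

/-- The set of lengths of `a`: all `k` such that `a` is a product of `k` atoms
(up to a unit of `H`). -/
def lengthSet (H : Submonoid G) (a : G) : Set ℕ :=
  {k | ∃ s : Multiset G, Multiset.card s = k ∧ (∀ v ∈ s, IsHAtom H v) ∧ HAssoc H a s.prod}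

/-- `Λ(S)`, the supremum of the minimal factorization lengths of elements of `S`. -/
noncomputable def Lambda (H : Submonoid G) (S : Set G) : ℕ∞ :=
  ⨆ (a : G) (_ : a ∈ S) (_ : (lengthSet H a).Nonempty), ((sInf (lengthSet H a) : ℕ) : ℕ∞)

/-- `ρ_k(H)`, the supremum of `sup L(a)` over all `a` with `k ∈ L(a)`. -/
noncomputable def rho (H : Submonoid G) (k : ℕ∞) : ℕ∞ :=
  ⨆ (a : G) (_ : a ∈ H) (_ : ∃ n ∈ lengthSet H a, (n : ℕ∞) = k),
    ⨆ (n : ℕ) (_ : n ∈ lengthSet H a), (n : ℕ∞)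

/-- The elasticity `ρ(H) = sup { m/n : m, n ∈ L(a), a ∈ H }`. -/
noncomputable def elasticity (H : Submonoid G) : ENNReal :=
  ⨆ (a : G) (_ : a ∈ H) (m : ℕ) (_ : m ∈ lengthSet H a) (n : ℕ) (_ : n ∈ lengthSet H a),
    (m : ENNReal) / (n : ENNReal)

/-- `z` is a factorization of `a`: a multiset of atoms whose product is associated to `a`. -/
def IsFactorization (H : Submonoid G) (a : G) (z : Multiset G) : Prop :=
  (∀ v ∈ z, IsHAtom H v) ∧ HAssoc H a z.prod

/-- The distance between two factorizations: cancel a (maximal) common part (up to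
associates) and take the maximum of the lengths of the remaining parts. -/
noncomputable def fdist (H : Submonoid G) (z z' : Multiset G) : ℕ :=
  sInf {N : ℕ | ∃ x x' v w : Multiset G, z = x + v ∧ z' = x' + w ∧
    Multiset.Rel (HAssoc H) x x' ∧ max (Multiset.card v) (Multiset.card w) ≤ N}

/-- `N` is a tame bound for the atom `u`: for every multiple `a` of `u` and every
factorization `z` of `a` there is a factorization `z'` of `a` containing `u`
with `d(z, z') ≤ N`. -/
def TameBound (H : Submonoid G) (u : G) (N : ℕ) : Prop :=
  ∀ a ∈ H, (∃ b ∈ H, a = u * b) → ∀ z : Multiset G, IsFactorization H a z →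
    ∃ z' : Multiset G, IsFactorization H a z' ∧ (∃ v ∈ z', HAssoc H v u) ∧ fdist H z z' ≤ N

/-- `H` is locally tame: `t(u) < ∞` for every atom `u`. -/
def LocallyTame (H : Submonoid G) : Prop :=
  ∀ u : G, IsHAtom H u → ∃ N : ℕ, TameBound H u N

/-- `H` is globally tame: `sup { t(u) : u an atom } < ∞`. -/
def GloballyTame (H : Submonoid G) : Prop :=
  ∃ N : ℕ, ∀ u : G, IsHAtom H u → TameBound H u N

/-- The local tame degree `t(u)` of `u`. -/
noncomputable def tameDeg (H : Submonoid G) (u : G) : ℕ∞ :=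
  sInf {N : ℕ∞ | ∃ n : ℕ, TameBound H u n ∧ N = (n : ℕ∞)}

/-- `N` is an omega bound for `a`: whenever `a` divides a product of elements of `H`,
it divides a subproduct with at most `N` factors. -/
def OmegaBound (H : Submonoid G) (a : G) (N : ℕ) : Prop :=
  ∀ s : Multiset G, (∀ x ∈ s, x ∈ H) → (∃ c ∈ H, s.prod = a * c) →
    ∃ t : Multiset G, t ≤ s ∧ Multiset.card t ≤ N ∧ ∃ c ∈ H, t.prod = a * c

/-- The omega invariant `ω(a)`. -/
noncomputable def omegaDeg (H : Submonoid G) (a : G) : ℕ∞ :=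
  sInf {N : ℕ∞ | ∃ n : ℕ, OmegaBound H a n ∧ N = (n : ℕ∞)}

/-- `M(x)`: the smallest `n ≥ 1` with `mⁿ ⊆ xH`. -/
noncomputable def Mdeg (H : Submonoid G) (x : G) : ℕ :=
  sInf {n : ℕ | 0 < n ∧ nonUnits H ^ n ⊆ x • (H : Set G)}

/-- The complete integral closure `Ĥ` of `H` (inside the quotient group). -/
def hatH (H : Submonoid G) : Set G := {x | ∃ c ∈ H, ∀ n : ℕ, c * x ^ n ∈ H}

/-- The set of non-units of `Ĥ`. -/
def hatNonUnits (H : Submonoid G) : Set G := {x | x ∈ hatH H ∧ x⁻¹ ∉ hatH H}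

/-- The root closure `H̃` of `H`. -/
def tildeH (H : Submonoid G) : Set G := {x | ∃ n : ℕ, 0 < n ∧ x ^ n ∈ H}

/-- The set of non-units of `H̃`. -/
def tildeNonUnits (H : Submonoid G) : Set G := {x | x ∈ tildeH H ∧ x⁻¹ ∉ tildeH H}

/-- The seminormal closure `H'` of `H`. -/
def seminormalClosure (H : Submonoid G) : Set G :=
  {x | ∃ N : ℕ, ∀ n : ℕ, N ≤ n → x ^ n ∈ H}

/-- The conductor `(H : Ĥ)`. -/
def conductorH (H : Submonoid G) : Set G := {z | ∀ x ∈ hatH H, z * x ∈ H}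

/-- `Ĥ` is a primary monoid. -/
def HatPrimary (H : Submonoid G) : Prop :=
  (hatNonUnits H).Nonempty ∧
    ∀ a ∈ hatNonUnits H, ∀ b ∈ hatNonUnits H,
      ∃ n : ℕ, 0 < n ∧ ∃ c ∈ hatH H, b ^ n = a * c

/-- `Ĥ` is a valuation monoid. -/
def HatValuation (H : Submonoid G) : Prop :=
  ∀ a ∈ hatH H, ∀ b ∈ hatH H,
    (∃ c ∈ hatH H, b = a * c) ∨ (∃ c ∈ hatH H, a = b * c)

/-- `H` is atomic. -/
def Atomic (H : Submonoid G) : Prop :=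
  ∀ a ∈ nonUnits H, ∃ s : Multiset G, (∀ v ∈ s, IsHAtom H v) ∧ a = s.prod

/-- `H` is a discrete valuation monoid, i.e. `H_red ≅ (ℕ₀, +)`. -/
def IsDiscreteValuationMonoid (H : Submonoid G) : Prop :=
  ∃ p ∈ H, ¬ IsHUnit H p ∧ ∀ a ∈ H, ∃ n : ℕ, ∃ ε : G, IsHUnit H ε ∧ a = ε * p ^ n

end MonoidDefs

section Aux
variable {G : Type*} [CommGroup G] (H : Submonoid G)

lemma hunit_one : IsHUnit H 1 := ⟨H.one_mem, by simpa using H.one_mem⟩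

lemma hunit_mul {x y : G} (hx : IsHUnit H x) (hy : IsHUnit H y) : IsHUnit H (x * y) :=
  ⟨H.mul_mem hx.1 hy.1, by rw [mul_inv]; exact H.mul_mem hx.2 hy.2⟩

lemma prod_mem_pow {S : Set G} :
    ∀ s : Multiset G, (∀ x ∈ s, x ∈ S) → s.prod ∈ S ^ (Multiset.card s) := by
  intro s
  induction s using Multiset.induction with
  | empty => intro _; simp [Set.mem_one]
  | cons a t ih =>
    intro h
    rw [Multiset.prod_cons, Multiset.card_cons, pow_succ']
    exact Set.mul_mem_mul (h a (by simp)) (ih (fun x hx => h x (by simp [hx])))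

lemma multiset_split {α : Type*} (t : Multiset α) (n : ℕ) (h : n ≤ Multiset.card t) :
    ∃ t₁ t₂ : Multiset α, t = t₁ + t₂ ∧ Multiset.card t₁ = n := by
  refine ⟨(t.toList.take n : List α), (t.toList.drop n : List α), ?_, ?_⟩
  · calc t = ↑t.toList := (Multiset.coe_toList t).symm
      _ = ↑(t.toList.take n ++ t.toList.drop n) := by rw [List.take_append_drop]
      _ = ↑(t.toList.take n) + ↑(t.toList.drop n) := (Multiset.coe_add _ _).symm
  · simp [List.length_take]
    omega

lemma card_le_of_nonunit_factorization {a : G} {n : ℕ}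
    (hn : nonUnits H ^ n ⊆ a • (H : Set G)) :
    ∀ s : Multiset G, (∀ x ∈ s, x ∈ nonUnits H) → HAssoc H a s.prod →
      Multiset.card s ≤ n := by
  intro s hs hassoc
  classical
  by_contra hlt
  push_neg at hlt
  obtain ⟨d, hd⟩ : ∃ d, d ∈ s :=
    Multiset.exists_mem_of_ne_zero (by rintro rfl; simp at hlt)
  have hse : s = d ::ₘ s.erase d := (Multiset.cons_erase hd).symm
  have hct : n ≤ Multiset.card (s.erase d) := by
    have := Multiset.card_cons d (s.erase d)
    rw [← hse] at this
    omega
  obtain ⟨t₁, t₂, hts, hct1⟩ := multiset_split (s.erase d) n hct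
  have hmem : ∀ x : G, (x ∈ t₁ ∨ x ∈ t₂) → x ∈ nonUnits H := by
    intro x hx
    apply hs
    rw [hse, hts]
    exact Multiset.mem_cons_of_mem (Multiset.mem_add.mpr hx)
  have ht1 : t₁.prod ∈ nonUnits H ^ n := by
    rw [← hct1]
    exact prod_mem_pow t₁ (fun x hx => hmem x (Or.inl hx))
  obtain ⟨h₁, hh₁, hh₁e⟩ := Set.mem_smul_set.mp (hn ht1)
  rw [smul_eq_mul] at hh₁e
  have ht2H : t₂.prod ∈ H :=
    Submonoid.multiset_prod_mem H t₂ (fun x hx => (hmem x (Or.inr hx)).1)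
  set ε := a / s.prod with hε
  have hεH : ε ∈ H := hassoc.1
  have ha_eq : a = s.prod * ε := (mul_div_cancel s.prod a).symm
  have hprod : s.prod = d * ((a * h₁) * t₂.prod) := by
    rw [hse, Multiset.prod_cons, hts, Multiset.prod_add, hh₁e]
  have key : a * 1 = a * (d * (h₁ * (t₂.prod * ε))) := by
    rw [mul_one]
    calc a = s.prod * ε := ha_eq
      _ = (d * ((a * h₁) * t₂.prod)) * ε := by rw [hprod]
      _ = a * (d * (h₁ * (t₂.prod * ε))) := by
            simp only [mul_comm, mul_left_comm, mul_assoc]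
  have h1 : (1 : G) = d * (h₁ * (t₂.prod * ε)) := mul_left_cancel key
  have : d⁻¹ ∈ H := by
    rw [inv_eq_of_mul_eq_one_right h1.symm]
    exact H.mul_mem hh₁ (H.mul_mem ht2H hεH)
  exact (hs d hd).2 this

lemma exists_atomic_factorization (hsp : IsStronglyPrimary H) {a : G} (ha : a ∈ nonUnits H) :
    ∃ s : Multiset G, (∀ v ∈ s, IsHAtom H v) ∧ HAssoc H a s.prod ∧ 0 < Multiset.card s := by
  classical
  obtain ⟨n, -, hn⟩ := hsp.2 a ha
  set K : Set ℕ :=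
    {k | ∃ s : Multiset G, (∀ x ∈ s, x ∈ nonUnits H) ∧ HAssoc H a s.prod ∧
      Multiset.card s = k} with hK
  have h1K : 1 ∈ K := by
    refine ⟨{a}, ?_, ?_, by simp⟩
    · intro x hx; rw [Multiset.mem_singleton] at hx; rw [hx]; exact ha
    · show IsHUnit H (a / ({a} : Multiset G).prod)
      simp only [Multiset.prod_singleton, div_self']
      exact hunit_one H
  have hbdd : ∀ k ∈ K, k ≤ n := by
    rintro k ⟨s, hs1, hs2, rfl⟩
    exact card_le_of_nonunit_factorization H hn s hs1 hs2
  have hmem : sSup K ∈ K := Nat.sSup_mem ⟨1, h1K⟩ ⟨n, hbdd⟩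
  obtain ⟨s, hs1, hs2, hcard⟩ := hmem
  have hone : 1 ≤ sSup K := le_csSup ⟨n, hbdd⟩ h1K
  refine ⟨s, ?_, hs2, by omega⟩
  intro v hv
  refine ⟨(hs1 v hv).1, fun h => (hs1 v hv).2 h.2, ?_⟩
  intro x y hx hy hxy
  by_contra hc
  push_neg at hc
  have hxm : x ∈ nonUnits H := ⟨hx, fun h => hc.1 ⟨hx, h⟩⟩
  have hym : y ∈ nonUnits H := ⟨hy, fun h => hc.2 ⟨hy, h⟩⟩
  have hnew : sSup K + 1 ∈ K := by
    refine ⟨x ::ₘ y ::ₘ s.erase v, ?_, ?_, ?_⟩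
    · intro z hz
      rcases Multiset.mem_cons.mp hz with rfl | hz
      · exact hxm
      rcases Multiset.mem_cons.mp hz with rfl | hz
      · exact hym
      · exact hs1 z (Multiset.mem_of_mem_erase hz)
    · show IsHUnit H (a / (x ::ₘ y ::ₘ s.erase v).prod)
      have : (x ::ₘ y ::ₘ s.erase v).prod = s.prod := by
        rw [Multiset.prod_cons, Multiset.prod_cons, ← mul_assoc, ← hxy,
          ← Multiset.prod_cons, Multiset.cons_erase hv]
      rw [this]
      exact hs2
    · simp [Multiset.card_cons, Multiset.card_erase_of_mem hv, hcard]
      omega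
  have := le_csSup ⟨n, hbdd⟩ hnew
  omega

lemma lengthSet_mul {a b : G} {j k : ℕ} (hj : j ∈ lengthSet H a) (hk : k ∈ lengthSet H b) :
    j + k ∈ lengthSet H (a * b) := by
  obtain ⟨s, hcs, hus, has⟩ := hj
  obtain ⟨t, hct, hut, hat⟩ := hk
  refine ⟨s + t, by simp [hcs, hct], ?_, ?_⟩
  · intro v hv
    rcases Multiset.mem_add.mp hv with h | h
    exacts [hus v h, hut v h]
  · show IsHUnit H ((a * b) / (s + t).prod)
    rw [Multiset.prod_add, ← div_mul_div_comm]
    exact hunit_mul H has hat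

lemma lengthSet_pow {b : G} {k : ℕ} (hk : k ∈ lengthSet H b) (n : ℕ) :
    n * k ∈ lengthSet H (b ^ n) := by
  induction n with
  | zero =>
    refine ⟨0, by simp, by simp, ?_⟩
    show IsHUnit H ((b ^ 0) / (0 : Multiset G).prod)
    simp only [pow_zero, Multiset.prod_zero, div_one]
    exact hunit_one H
  | succ n ih =>
    have := lengthSet_mul H ih hk
    rwa [← pow_succ, ← Nat.succ_mul] at this

lemma sInf_le_Lambda {x : G} (hx : x ∈ H) (hne : (lengthSet H x).Nonempty) :
    ((sInf (lengthSet H x) : ℕ) : ℕ∞) ≤ Lambda H (H : Set G) :=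
  le_iSup_of_le x (le_iSup_of_le hx (le_iSup_of_le hne le_rfl))

end Aux


/-- Let `H` be a strongly primary monoid with `Λ(H) < ∞`. Then
`ρ_{Λ(H)}(H) = ∞`, hence `ρ_k(H) = ∞` for all `k ≥ Λ(H)`; in particular `H` is not
half-factorial. -/
theorem stmt11 {G : Type*} [CommGroup G] (H : Submonoid G) (hq : IsQuotientGroup H)
    (hsp : IsStronglyPrimary H) (hL : Lambda H (H : Set G) < ⊤) :
    rho H (Lambda H (H : Set G)) = ⊤ ∧
    (∀ k : ℕ, Lambda H (H : Set G) ≤ (k : ℕ∞) → rho H (k : ℕ∞) = ⊤) ∧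
    ¬ (∀ a ∈ H, (lengthSet H a).Subsingleton) := by
  classical
  set lam : ℕ := (Lambda H (H : Set G)).toNat with hlam
  have hcoe : ((lam : ℕ) : ℕ∞) = Lambda H (H : Set G) := ENat.coe_toNat hL.ne
  obtain ⟨b, hb⟩ := hsp.1
  obtain ⟨sb, hsb_atoms, hsb_assoc, hsb_pos⟩ := exists_atomic_factorization H hsp hb
  have htb : Multiset.card sb ∈ lengthSet H b := ⟨sb, rfl, hsb_atoms, hsb_assoc⟩
  obtain ⟨u, hu_mem⟩ := Multiset.exists_mem_of_ne_zero (s := sb) (by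
    intro h; rw [h] at hsb_pos; simp at hsb_pos)
  have hu : IsHAtom H u := hsb_atoms u hu_mem
  have hu1 : 1 ∈ lengthSet H u := by
    refine ⟨{u}, by simp, ?_, ?_⟩
    · intro v hv; rw [Multiset.mem_singleton] at hv; rw [hv]; exact hu
    · show IsHUnit H (u / ({u} : Multiset G).prod)
      simp only [Multiset.prod_singleton, div_self']
      exact hunit_one H
  have key : ∀ k N : ℕ, lam ≤ k →
      ∃ a ∈ H, k ∈ lengthSet H a ∧ ∃ n ∈ lengthSet H a, N ≤ n := by
    intro k N hk
    have hbN : N * Multiset.card sb ∈ lengthSet H (b ^ N) := lengthSet_pow H htb N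
    have hne : (lengthSet H (b ^ N)).Nonempty := ⟨_, hbN⟩
    set m : ℕ := sInf (lengthSet H (b ^ N)) with hm
    have hm_mem : m ∈ lengthSet H (b ^ N) := Nat.sInf_mem hne
    have hm_le : m ≤ lam := by
      have h1 := sInf_le_Lambda H (pow_mem hb.1 N) hne
      rw [← hcoe] at h1
      exact_mod_cast h1
    have hjk : (k - m) * 1 ∈ lengthSet H (u ^ (k - m)) := lengthSet_pow H hu1 (k - m)
    rw [mul_one] at hjk
    refine ⟨b ^ N * u ^ (k - m), H.mul_mem (pow_mem hb.1 N) (pow_mem hu.1 (k - m)), ?_, ?_⟩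
    · have := lengthSet_mul H hm_mem hjk
      rwa [Nat.add_sub_cancel' (hm_le.trans hk)] at this
    · refine ⟨N * Multiset.card sb + (k - m), lengthSet_mul H hbN hjk, ?_⟩
      calc N = N * 1 := (mul_one N).symm
        _ ≤ N * Multiset.card sb := Nat.mul_le_mul_left N hsb_pos
        _ ≤ _ := Nat.le_add_right _ _
  have rho_top : ∀ k : ℕ, lam ≤ k → rho H (k : ℕ∞) = ⊤ := by
    intro k hk
    by_contra hnet
    set M : ℕ := (rho H (k : ℕ∞)).toNat with hMd
    have hM : ((M : ℕ) : ℕ∞) = rho H (k : ℕ∞) := ENat.coe_toNat hnet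
    obtain ⟨a, ha, hka, n, hn, hNn⟩ := key k (M + 1) hk
    have h1 : ((M + 1 : ℕ) : ℕ∞) ≤ rho H (k : ℕ∞) := by
      calc ((M + 1 : ℕ) : ℕ∞) ≤ (n : ℕ∞) := by exact_mod_cast hNn
        _ ≤ rho H (k : ℕ∞) :=
          le_iSup_of_le a (le_iSup_of_le ha (le_iSup_of_le ⟨k, hka, rfl⟩
            (le_iSup_of_le n (le_iSup_of_le hn le_rfl))))
    rw [← hM] at h1
    have : M + 1 ≤ M := by exact_mod_cast h1
    omega
  refine ⟨?_, ?_, ?_⟩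
  · rw [← hcoe]; exact rho_top lam le_rfl
  · intro k hkk
    apply rho_top
    rw [← hcoe] at hkk
    exact_mod_cast hkk
  · intro hss
    obtain ⟨a, ha, hka, n, hn, hNn⟩ := key lam (lam + 1) le_rfl
    have := hss a ha hka hn
    omega
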